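/- If L is an injective semilinear operator on a complex Hilbert space H with dim H ≥ 3 that sends orthogonal vectors to orthogonal vectors, then L is a non-zero scalar multiple of a linear or conjugate-linear isometry. -/

import Mathlib

open InnerProductSpace

theorem rc_cast (r : ℝ) : (RCLike.ofReal r : ℂ) = Complex.ofReal r := rfl

theorem aux_perp {H : Type*} [NormedAddCommGroup H] [InnerProductSpace ℂ H] [CompleteSpace H]
    (hdim : 3 ≤ Module.rank ℂ H) (x y : H) :
    ∃ z : H, ‖z‖ = 1 ∧ ⟪x, z⟫_ℂ = 0 ∧ ⟪y, z⟫_ℂ = 0 := by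
  set K : Submodule ℂ H := Submodule.span ℂ {x, y} with hK
  haveI : FiniteDimensional ℂ K := FiniteDimensional.span_of_finite ℂ (by
    exact (Set.finite_singleton y).insert x)
  have hne : Kᗮ ≠ ⊥ := by
    intro hbot
    have hKtop : K = ⊤ := Submodule.orthogonal_eq_bot_iff.mp hbot
    have h1 : Module.rank ℂ K ≤ 2 := by
      refine le_trans (rank_span_le _) ?_
      calc Cardinal.mk ({x, y} : Set H) ≤ Cardinal.mk ({y} : Set H) + 1 :=
            Cardinal.mk_insert_le
        _ ≤ 2 := by rw [Cardinal.mk_singleton]; norm_num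
    rw [hKtop] at h1
    have h2 : Module.rank ℂ H ≤ 2 := by rwa [rank_top] at h1
    have := le_trans hdim h2
    norm_num at this
  obtain ⟨z0, hz0K, hz0⟩ := Submodule.exists_mem_ne_zero_of_ne_bot hne
  refine ⟨(‖z0‖ : ℂ)⁻¹ • z0, ?_, ?_, ?_⟩
  · rw [norm_smul]
    simp [norm_ne_zero_iff.mpr hz0]
  · rw [inner_smul_right, hz0K x (Submodule.subset_span (by simp)), mul_zero]
  · rw [inner_smul_right, hz0K y (Submodule.subset_span (by simp)), mul_zero]

theorem aux_a1 {H : Type*} [NormedAddCommGroup H] [InnerProductSpace ℂ H]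
    (L : H → H)
    (hadd : ∀ x y : H, L (x + y) = L x + L y)
    (hneg : ∀ x : H, L (-x) = - L x)
    (horth : ∀ x y : H, ⟪x, y⟫_ℂ = 0 → ⟪L x, L y⟫_ℂ = 0)
    (x y : H) (hx : ‖x‖ = 1) (hy : ‖y‖ = 1) (hxy : ⟪x, y⟫_ℂ = 0) :
    ‖L x‖ = ‖L y‖ := by
  have hyx : ⟪y, x⟫_ℂ = 0 := by rw [← inner_conj_symm, hxy, map_zero]
  have h1 : ⟪x + y, x - y⟫_ℂ = 0 := by
    simp [inner_add_left, inner_sub_right, hxy, hyx,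
      inner_self_eq_norm_sq_to_K, hx, hy]
  have h2 := horth _ _ h1
  have hsub : L (x - y) = L x - L y := by
    rw [sub_eq_add_neg, hadd, hneg, sub_eq_add_neg]
  rw [hadd, hsub, inner_add_left, inner_sub_right, inner_sub_right,
    horth x y hxy, horth y x hyx, inner_self_eq_norm_sq_to_K,
    inner_self_eq_norm_sq_to_K] at h2
  rw [sub_zero, zero_sub, add_neg_eq_zero] at h2
  have h4 : ‖L x‖ ^ 2 = ‖L y‖ ^ 2 := by exact_mod_cast h2
  calc ‖L x‖ = Real.sqrt (‖L x‖ ^ 2) := (Real.sqrt_sq (norm_nonneg _)).symm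
    _ = Real.sqrt (‖L y‖ ^ 2) := by rw [h4]
    _ = ‖L y‖ := Real.sqrt_sq (norm_nonneg _)

theorem stmt_0 {H : Type*} [NormedAddCommGroup H] [InnerProductSpace ℂ H] [CompleteSpace H]
    (hdim : 3 ≤ Module.rank ℂ H) (L : H → H)
    (hadd : ∀ x y : H, L (x + y) = L x + L y)
    (hsemi : ∃ σ : ℂ →+* ℂ, ∀ (a : ℂ) (x : H), L (a • x) = σ a • L x)
    (hinj : Function.Injective L)
    (horth : ∀ x y : H, ⟪x, y⟫_ℂ = 0 → ⟪L x, L y⟫_ℂ = 0) :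
    ∃ c : ℂ, c ≠ 0 ∧
      ((∃ T : H →ₗᵢ[ℂ] H, ∀ x, L x = c • T x) ∨
       (∃ T : H →ₗᵢ⋆[ℂ] H, ∀ x, L x = c • T x)) := by
  obtain ⟨σ, hσ⟩ := hsemi
  have hL0 : L 0 = 0 := by
    have h : L 0 = L 0 + L 0 := by simpa using hadd 0 0
    exact (left_eq_add.mp h)
  have hneg : ∀ x : H, L (-x) = -L x := by
    intro x
    have h := hσ (-1) x
    simpa using h
  have hnz : ∀ x : H, x ≠ 0 → L x ≠ 0 := fun x hx h => hx (hinj (h.trans hL0.symm))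
  obtain ⟨e, he1, -, -⟩ := aux_perp hdim 0 0
  set k := ‖L e‖ with hk
  have hkpos : 0 < k := norm_pos_iff.mpr (hnz e (by
    intro h; rw [h] at he1; simp at he1))
  have hkc0 : (k : ℂ) ≠ 0 := Complex.ofReal_ne_zero.mpr (ne_of_gt hkpos)
  have hconst : ∀ x : H, ‖x‖ = 1 → ‖L x‖ = k := by
    intro x hx
    obtain ⟨z, hz1, hxz, hez⟩ := aux_perp hdim x e
    rw [aux_a1 L hadd hneg horth x z hx hz1 hxz, hk]
    exact aux_a1 L hadd hneg horth z e hz1 he1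
      (by rw [← inner_conj_symm, hez, map_zero])
  -- σ commutes with complex conjugation
  have hconj : ∀ a : ℂ, σ (starRingEnd ℂ a) = starRingEnd ℂ (σ a) := by
    intro a
    obtain ⟨y, hy1, hey, -⟩ := aux_perp hdim e e
    have hye : ⟪y, e⟫_ℂ = 0 := by rw [← inner_conj_symm, hey, map_zero]
    have hLy : ‖L y‖ = k := hconst y hy1
    have h1 : ⟪a • e + y, e - (starRingEnd ℂ a) • y⟫_ℂ = 0 := by
      simp [inner_add_left, inner_sub_right, inner_smul_left, inner_smul_right,
        hey, hye, inner_self_eq_norm_sq_to_K, he1, hy1]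
    have h2 := horth _ _ h1
    have hLu : L (a • e + y) = σ a • L e + L y := by rw [hadd, hσ]
    have hLv : L (e - (starRingEnd ℂ a) • y) = L e - σ (starRingEnd ℂ a) • L y := by
      rw [sub_eq_add_neg, hadd, hneg, hσ, sub_eq_add_neg]
    rw [hLu, hLv] at h2
    simp only [inner_add_left, inner_sub_right, inner_smul_left, inner_smul_right,
      horth e y hey, horth y e hye, inner_self_eq_norm_sq_to_K, hLy, mul_zero,
      sub_zero, zero_sub, ← hk] at h2
    simp only [rc_cast] at h2
    have hk0 : ((k : ℂ)) ^ 2 ≠ 0 := pow_ne_zero _ hkc0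
    have h3 : (σ ((starRingEnd ℂ) a) - (starRingEnd ℂ) (σ a)) * (k : ℂ) ^ 2 = 0 := by
      linear_combination -h2
    rcases mul_eq_zero.mp h3 with h | h
    · exact sub_eq_zero.mp h
    · exact absurd h hk0
  -- σ fixes the reals
  have him0 : ∀ r : ℝ, (σ (r : ℂ)).im = 0 := by
    intro r
    have h := hconj (r : ℂ)
    rw [Complex.conj_ofReal] at h
    exact Complex.conj_eq_iff_im.mp h.symm
  have hre : ∀ r : ℝ, σ (r : ℂ) = (r : ℂ) := by
    let f : ℝ →+* ℝ :=
      { toFun := fun r => (σ (r : ℂ)).re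
        map_one' := by simp
        map_mul' := fun r s => by
          simp only [Complex.ofReal_mul, map_mul, Complex.mul_re, him0]
          ring
        map_zero' := by simp
        map_add' := fun r s => by
          simp only [Complex.ofReal_add, map_add, Complex.add_re] }
    have hf : f = RingHom.id ℝ := Subsingleton.elim _ _
    intro r
    have h1 : (σ (r : ℂ)).re = r := by
      have := congrArg (fun g : ℝ →+* ℝ => g r) hf
      exact this
    apply Complex.ext
    · simpa using h1
    · simpa using him0 r
  -- σ is the identity or conjugation
  have hI : σ Complex.I = Complex.I ∨ σ Complex.I = -Complex.I := by
    have h1 : σ Complex.I ^ 2 = -1 := by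
      rw [← map_pow, Complex.I_sq, map_neg, map_one]
    have h2 : (σ Complex.I - Complex.I) * (σ Complex.I + Complex.I) = 0 := by
      linear_combination h1 - Complex.I_sq
    rcases mul_eq_zero.mp h2 with h | h
    · exact Or.inl (sub_eq_zero.mp h)
    · exact Or.inr (eq_neg_of_add_eq_zero_left h)
  -- norm identity
  have hσnorm : ∀ a : ℂ, ‖σ a‖ = ‖a‖ := by
    intro a
    rcases hI with hI | hI
    · have : σ a = a := by
        conv_lhs => rw [← Complex.re_add_im a]
        rw [map_add, map_mul, hre, hre, hI, Complex.re_add_im]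
      rw [this]
    · have : σ a = starRingEnd ℂ a := by
        conv_lhs => rw [← Complex.re_add_im a]
        rw [map_add, map_mul, hre, hre, hI]
        apply Complex.ext <;> simp
      rw [this, RCLike.norm_conj]
  have hnormL : ∀ x : H, ‖L x‖ = k * ‖x‖ := by
    intro x
    rcases eq_or_ne x 0 with rfl | hx
    · simp [hL0]
    · have hn0 : ‖x‖ ≠ 0 := norm_ne_zero_iff.mpr hx
      have hu : ‖(‖x‖ : ℂ)⁻¹ • x‖ = 1 := by
        rw [norm_smul]; simp [hn0]
      have hx' : x = (‖x‖ : ℂ) • ((‖x‖ : ℂ)⁻¹ • x) := by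
        rw [smul_smul, mul_inv_cancel₀ (Complex.ofReal_ne_zero.mpr hn0), one_smul]
      calc ‖L x‖ = ‖L ((‖x‖ : ℂ) • ((‖x‖ : ℂ)⁻¹ • x))‖ := by rw [← hx']
        _ = ‖σ (‖x‖ : ℂ) • L ((‖x‖ : ℂ)⁻¹ • x)‖ := by rw [hσ]
        _ = ‖x‖ * k := by
            rw [norm_smul, hσnorm, hconst _ hu]
            simp [abs_of_nonneg (norm_nonneg x)]
        _ = k * ‖x‖ := mul_comm _ _
  refine ⟨(k : ℂ), hkc0, ?_⟩
  rcases hI with hI | hI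
  · -- σ = id
    have hσid : ∀ a : ℂ, σ a = a := by
      intro a
      conv_lhs => rw [← Complex.re_add_im a]
      rw [map_add, map_mul, hre, hre, hI, Complex.re_add_im]
    let Tlin : H →ₗ[ℂ] H :=
      { toFun := fun x => (k : ℂ)⁻¹ • L x
        map_add' := fun x y => by simp only [hadd, smul_add]
        map_smul' := fun a x => by
          simp only [hσ, hσid, RingHom.id_apply, smul_comm ((k : ℂ)⁻¹)] }
    refine Or.inl ⟨⟨Tlin, fun x => ?_⟩, fun x => ?_⟩
    · show ‖(k : ℂ)⁻¹ • L x‖ = ‖x‖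
      rw [norm_smul, hnormL]
      simp only [norm_inv, Complex.norm_real, Real.norm_eq_abs,
        abs_of_nonneg (le_of_lt hkpos)]
      field_simp
    · show L x = (k : ℂ) • ((k : ℂ)⁻¹ • L x)
      rw [smul_inv_smul₀ hkc0]
  · -- σ = conj
    have hσconj : ∀ a : ℂ, σ a = starRingEnd ℂ a := by
      intro a
      conv_lhs => rw [← Complex.re_add_im a]
      rw [map_add, map_mul, hre, hre, hI]
      apply Complex.ext <;> simp
    let Tlin : H →ₛₗ[starRingEnd ℂ] H :=
      { toFun := fun x => (k : ℂ)⁻¹ • L x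
        map_add' := fun x y => by simp only [hadd, smul_add]
        map_smul' := fun a x => by
          simp only [hσ, hσconj, smul_comm ((k : ℂ)⁻¹)] }
    refine Or.inr ⟨⟨Tlin, fun x => ?_⟩, fun x => ?_⟩
    · show ‖(k : ℂ)⁻¹ • L x‖ = ‖x‖
      rw [norm_smul, hnormL]
      simp only [norm_inv, Complex.norm_real, Real.norm_eq_abs,
        abs_of_nonneg (le_of_lt hkpos)]
      field_simp
    · show L x = (k : ℂ) • ((k : ℂ)⁻¹ • L x)
      rw [smul_inv_smul₀ hkc0]
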